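/- For every r ≥ 2, there is an r-coloring of {1,...,n} with at most n²/(2^{2r−3}·11) + O(n) monochromatic Schur triples. The coloring: color C_j for n/2^j < i ≤ n/2^{j−1} (1 ≤ j ≤ r−2); color C_{r−1} for i ≤ 4n/(2^{r−2}·11) or 10n/(2^{r−2}·11) < i ≤ n/2^{r−2}; color C_r for 4n/(2^{r−2}·11) < i ≤ 10n/(2^{r−2}·11). -/

import Mathlib

open Finset

/-- Number of monochromatic Schur triples (i, j, i+j), i < j, i+j ≤ n, of a coloring c. -/
def schurCount {α : Type*} [DecidableEq α] (n : ℕ) (c : ℕ → α) : ℕ :=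
  ((Finset.Icc 1 n ×ˢ Finset.Icc 1 n).filter
    (fun p => p.1 < p.2 ∧ p.1 + p.2 ≤ n ∧ c p.1 = c p.2 ∧ c p.2 = c (p.1 + p.2))).card

/-- Counting lemma: the full triangle `{(i,j) : 1 ≤ i, 1 ≤ j, i + j ≤ m}` has at most
`m²/2` points. -/
lemma schur_tcount : ∀ m : ℕ,
    2 * ((Icc 1 m ×ˢ Icc 1 m).filter fun p => p.1 + p.2 ≤ m).card ≤ m * m := by
  intro m
  induction m with
  | zero => simp
  | succ m ih =>
    have hsub : ((Icc 1 (m+1) ×ˢ Icc 1 (m+1)).filter fun p => p.1 + p.2 ≤ m+1) ⊆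
        ((Icc 1 m ×ˢ Icc 1 m).filter fun p => p.1 + p.2 ≤ m) ∪
          (Icc 1 m).image (fun i => (i, m+1-i)) := by
      rintro ⟨i, j⟩ hp
      simp only [mem_filter, mem_product, mem_Icc, mem_union, mem_image] at hp ⊢
      obtain ⟨⟨⟨h1, h2⟩, h3, h4⟩, h5⟩ := hp
      rcases Nat.lt_or_ge (i + j) (m+1) with h | h
      · exact Or.inl ⟨⟨⟨h1, by omega⟩, h3, by omega⟩, by omega⟩
      · exact Or.inr ⟨i, ⟨h1, by omega⟩, by rw [show m + 1 - i = j by omega]⟩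
    have h2 : ((Icc 1 (m+1) ×ˢ Icc 1 (m+1)).filter fun p => p.1 + p.2 ≤ m+1).card ≤
        ((Icc 1 m ×ˢ Icc 1 m).filter fun p => p.1 + p.2 ≤ m).card + m := by
      refine le_trans (card_le_card hsub) (le_trans (card_union_le _ _) ?_)
      have := card_image_le (s := Icc 1 m) (f := fun i => (i, m+1-i))
      simp at this ⊢
      omega
    have hsq : (m+1)*(m+1) = m*m + 2*m + 1 := by ring
    omega

/-- Counting lemma: there are at most `m²/4` pairs `(i,j)` with `1 ≤ i < j` and `i + j ≤ m`. -/
lemma schur_quadBound (N m : ℕ) :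
    4 * ((Icc 1 N ×ˢ Icc 1 N).filter fun p => p.1 < p.2 ∧ p.1 + p.2 ≤ m).card ≤ m * m := by
  set S := (Icc 1 N ×ˢ Icc 1 N).filter fun p => p.1 < p.2 ∧ p.1 + p.2 ≤ m with hS
  have hdis : Disjoint S (S.image Prod.swap) := by
    rw [Finset.disjoint_left]
    rintro ⟨i, j⟩ hp hq
    simp only [hS, mem_filter, mem_product, mem_image, mem_Icc] at hp hq
    obtain ⟨q, ⟨_, hq1, _⟩, hq2⟩ := hq
    have h0 : q.swap = (i, j) := hq2
    have : q.2 = i ∧ q.1 = j := by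
      constructor <;> [exact congrArg Prod.fst h0; exact congrArg Prod.snd h0]
    omega
  have hcard : S.card + (S.image Prod.swap).card ≤
      ((Icc 1 m ×ˢ Icc 1 m).filter fun p => p.1 + p.2 ≤ m).card := by
    rw [← card_union_of_disjoint hdis]
    apply card_le_card
    apply union_subset
    · rintro ⟨i, j⟩ hp
      simp only [hS, mem_filter, mem_product, mem_Icc] at hp ⊢
      omega
    · rintro ⟨i, j⟩ hp
      simp only [hS, mem_filter, mem_product, mem_Icc, mem_image] at hp ⊢
      obtain ⟨q, hq, hq2⟩ := hp
      have h1 : q.2 = i ∧ q.1 = j := by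
        constructor <;> [exact congrArg Prod.fst hq2; exact congrArg Prod.snd hq2]
      omega
  have himg : (S.image Prod.swap).card = S.card :=
    card_image_of_injective _ Prod.swap_injective
  have := schur_tcount m
  omega

set_option maxHeartbeats 1600000 in
theorem rColoring_upper_bound (r : ℕ) (hr : 2 ≤ r) :
    ∃ C : ℝ, ∀ n : ℕ, ∃ c : ℕ → Fin r,
      (schurCount n c : ℝ) ≤ (n : ℝ) ^ 2 / (2 ^ (2 * r - 3) * 11) + C * n := by
  obtain ⟨s, rfl⟩ : ∃ s, r = s + 2 := ⟨r - 2, by omega⟩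
  refine ⟨5, fun n => ?_⟩
  set D := 11 * 2 ^ s with hD
  set a := 4 * n / D with ha
  set b := 10 * n / D with hb
  set M := n / 2 ^ s with hM
  have hD0 : 0 < D := by positivity
  have hMD : 11 * n / D = M := by rw [hD, hM, Nat.mul_div_mul_left _ _ (by norm_num)]
  have hadm : 4 * n < D * a + D ∧ D * a ≤ 4 * n := by
    have h := Nat.div_add_mod (4 * n) D
    have h' := Nat.mod_lt (4 * n) hD0
    rw [← ha] at h
    omega
  have hbdm : 10 * n < D * b + D ∧ D * b ≤ 10 * n := by
    have h := Nat.div_add_mod (10 * n) D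
    have h' := Nat.mod_lt (10 * n) hD0
    rw [← hb] at h
    omega
  have hab2 : 2 * a ≤ b := by
    have h1 : 2 * a ≤ 8 * n / D := by
      rw [Nat.le_div_iff_mul_le hD0]
      calc 2 * a * D = 2 * (D * a) := by ring
        _ ≤ 2 * (4 * n) := by omega
        _ = 8 * n := by ring
    exact le_trans h1 (Nat.div_le_div_right (by omega))
  have haleb : a ≤ b := by omega
  have hbM : b ≤ M := by rw [← hMD]; exact Nat.div_le_div_right (by omega)
  have hMdm : D * M ≤ 11 * n := by
    have h1 : M * 2 ^ s ≤ n := Nat.div_mul_le_self n (2 ^ s)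
    calc D * M = 11 * (M * 2 ^ s) := by rw [hD]; ring
      _ ≤ 11 * n := by omega
  have hM2b : M < 2 * b + 2 := by
    by_contra hcon
    push_neg at hcon
    have h2 : D * (2 * b + 2) ≤ D * M := Nat.mul_le_mul_left D hcon
    have h3 : D * (2 * b + 2) = 2 * (D * b) + 2 * D := by ring
    omega
  -- dyadic facts
  have hdyad : ∀ x, M < x → x ≤ n → 0 < n / x ∧ Nat.log2 (n / x) < s := by
    intro x hMx hxn
    have hx0 : 0 < x := lt_of_le_of_lt (Nat.zero_le M) hMx
    have h1 : 0 < n / x := (Nat.one_le_div_iff hx0).mpr hxn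
    have h2 : n < x * 2 ^ s :=
      (Nat.div_lt_iff_lt_mul (by positivity)).mp (by rw [← hM] at *; exact hMx)
    have h3 : n / x < 2 ^ s := (Nat.div_lt_iff_lt_mul hx0).mpr (by linarith [h2])
    exact ⟨h1, (Nat.log2_lt (by omega)).mpr h3⟩
  have hsf : ∀ i j : ℕ, 1 ≤ i → 1 ≤ j → i + j ≤ n →
      Nat.log2 (n / i) = Nat.log2 (n / (i + j)) →
      Nat.log2 (n / j) = Nat.log2 (n / (i + j)) → False := by
    intro i j hi hj hijn e1 e2
    set t := Nat.log2 (n / (i + j)) with ht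
    have hs0 : 0 < n / (i + j) := (Nat.one_le_div_iff (by omega)).mpr hijn
    have hs1 : 2 ^ t * (i + j) ≤ n :=
      (Nat.le_div_iff_mul_le (by omega)).mp (Nat.log2_self_le (by omega))
    have hi1 : n < 2 ^ (t + 1) * i := by
      have h := Nat.lt_log2_self (n := n / i)
      rw [e1] at h
      have := (Nat.div_lt_iff_lt_mul (show 0 < i by omega)).mp h
      linarith
    have hj1 : n < 2 ^ (t + 1) * j := by
      have h := Nat.lt_log2_self (n := n / j)
      rw [e2] at h
      have := (Nat.div_lt_iff_lt_mul (show 0 < j by omega)).mp h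
      linarith
    have hp : (2:ℕ) ^ (t + 1) = 2 * 2 ^ t := by rw [pow_succ]; ring
    nlinarith
  -- the coloring
  set g : ℕ → ℕ := fun i =>
    if i ≤ a then s else if i ≤ b then s + 1 else if i ≤ M then s
    else min s (Nat.log2 (n / i)) with hg
  have hlt : ∀ i, g i < s + 2 := by
    intro i
    rw [hg]
    simp only
    split_ifs <;> omega
  have hA : ∀ x, 1 ≤ x → x ≤ n → g x = s → x ≤ a ∨ (b < x ∧ x ≤ M) := by
    intro x hx1 hxn
    rw [hg]; simp only
    split_ifs with h1 h2 h3 <;> intro hx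
    · exact Or.inl h1
    · omega
    · exact Or.inr ⟨by omega, h3⟩
    · exact absurd hx (by have := (hdyad x (by omega) hxn).2; omega)
  have hB : ∀ x, g x = s + 1 → a < x ∧ x ≤ b := by
    intro x
    rw [hg]; simp only
    split_ifs with h1 h2 h3 <;> intro hx <;> omega
  have hC : ∀ x, x ≤ n → M < x → g x = Nat.log2 (n / x) ∧ Nat.log2 (n / x) < s := by
    intro x hxn hMx
    have h2 := (hdyad x hMx hxn).2
    rw [hg]; simp only
    split_ifs with h1 h2' h3 <;> [omega; omega; omega; exact ⟨by omega, h2⟩]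
  refine ⟨fun i => ⟨g i, hlt i⟩, ?_⟩
  -- reduce to counting sets
  have hsub : ((Icc 1 n ×ˢ Icc 1 n).filter (fun p => p.1 < p.2 ∧ p.1 + p.2 ≤ n ∧
        g p.1 = g p.2 ∧ g p.2 = g (p.1 + p.2))) ⊆
      ((Icc 1 n ×ˢ Icc 1 n).filter (fun p => p.1 < p.2 ∧ p.1 + p.2 ≤ a)) ∪
      ((Icc 1 n ×ˢ Icc 1 n).filter (fun p => a < p.1 ∧ p.1 < p.2 ∧ p.1 + p.2 ≤ b)) ∪
      ((Icc 1 n ×ˢ Icc 1 n).filter (fun p => b < p.2 ∧ p.1 + p.2 ≤ M)) := by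
    rintro ⟨i, j⟩ hp
    simp only [mem_filter, mem_product, mem_Icc, mem_union] at hp ⊢
    obtain ⟨⟨⟨hi1, hi2⟩, hj1, hj2⟩, hij, hsn, e1, e2⟩ := hp
    have hsval : 1 ≤ i + j := by omega
    rcases Nat.lt_or_ge a i with hai | hia
    · rcases Nat.lt_or_ge b i with hbi | hib
      · rcases Nat.lt_or_ge M i with hMi | hiM
        · exfalso
          have hci := hC i hi2 hMi
          have hcj := hC j hj2 (by omega)
          have hcs := hC (i + j) hsn (by omega)
          exact hsf i j hi1 hj1 hsn (by omega) (by omega)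
        · exfalso
          have hgi : g i = s := by rw [hg]; simp only; split_ifs <;> omega
          have hs2 := hA (i + j) hsval hsn (by omega)
          omega
      · have hgi : g i = s + 1 := by rw [hg]; simp only; split_ifs <;> omega
        have hj' := hB j (by omega)
        have hs' := hB (i + j) (by omega)
        exact Or.inl (Or.inr ⟨⟨⟨by omega, by omega⟩, by omega, by omega⟩, hai, hij, hs'.2⟩)
    · have hgi : g i = s := by rw [hg]; simp only; split_ifs <;> omega
      have hj' := hA j hj1 hj2 (by omega)
      have hs' := hA (i + j) hsval hsn (by omega)
      rcases hj' with hja | ⟨hjb, hjM⟩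
      · refine Or.inl (Or.inl ⟨⟨⟨by omega, by omega⟩, by omega, by omega⟩, hij, ?_⟩)
        omega
      · exact Or.inr ⟨⟨⟨by omega, by omega⟩, by omega, by omega⟩, hjb, by omega⟩
  -- the three counting bounds
  set T1 := (Icc 1 n ×ˢ Icc 1 n).filter (fun p => p.1 < p.2 ∧ p.1 + p.2 ≤ a) with hT1
  set T2 := (Icc 1 n ×ˢ Icc 1 n).filter (fun p => a < p.1 ∧ p.1 < p.2 ∧ p.1 + p.2 ≤ b) with hT2
  set T3 := (Icc 1 n ×ˢ Icc 1 n).filter (fun p => b < p.2 ∧ p.1 + p.2 ≤ M) with hT3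
  have hk1 : 4 * T1.card ≤ a * a := schur_quadBound n a
  have hk2 : 4 * T2.card ≤ (b - 2*a) * (b - 2*a) := by
    have hle : T2.card ≤
        ((Icc 1 n ×ˢ Icc 1 n).filter fun p => p.1 < p.2 ∧ p.1 + p.2 ≤ b - 2*a).card := by
      apply card_le_card_of_injOn (fun p => (p.1 - a, p.2 - a))
      · rintro ⟨i, j⟩ hp
        simp only [hT2, mem_coe, mem_filter, mem_product, mem_Icc] at hp ⊢
        omega
      · rintro ⟨i, j⟩ hp ⟨i', j'⟩ hp' heq
        simp only [hT2, mem_coe, mem_filter, mem_product, mem_Icc] at hp hp'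
        have h1 : i - a = i' - a := congrArg Prod.fst heq
        have h2 : j - a = j' - a := congrArg Prod.snd heq
        have : i = i' ∧ j = j' := by omega
        simp [Prod.ext_iff, this.1, this.2]
    have := schur_quadBound n (b - 2*a)
    omega
  have hk3 : 2 * T3.card ≤ (M - b) * (M - b) := by
    have hle : T3.card ≤
        ((Icc 1 (M-b) ×ˢ Icc 1 (M-b)).filter fun p => p.1 + p.2 ≤ M - b).card := by
      apply card_le_card_of_injOn (fun p => (p.1, p.2 - b))
      · rintro ⟨i, j⟩ hp
        simp only [hT3, mem_coe, mem_filter, mem_product, mem_Icc] at hp ⊢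
        omega
      · rintro ⟨i, j⟩ hp ⟨i', j'⟩ hp' heq
        simp only [hT3, mem_coe, mem_filter, mem_product, mem_Icc] at hp hp'
        have h1 : i = i' := congrArg Prod.fst heq
        have h2 : j - b = j' - b := congrArg Prod.snd heq
        have : i = i' ∧ j = j' := by omega
        simp [Prod.ext_iff, this.1, this.2]
    have := schur_tcount (M - b)
    omega
  have hcount : schurCount n (fun i => (⟨g i, hlt i⟩ : Fin (s + 2))) ≤
      T1.card + T2.card + T3.card := by
    have heq : schurCount n (fun i => (⟨g i, hlt i⟩ : Fin (s + 2))) =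
        ((Icc 1 n ×ˢ Icc 1 n).filter (fun p => p.1 < p.2 ∧ p.1 + p.2 ≤ n ∧
          g p.1 = g p.2 ∧ g p.2 = g (p.1 + p.2))).card := by
      simp only [schurCount, Fin.mk.injEq]
    rw [heq]
    refine le_trans (card_le_card hsub) (le_trans (card_union_le _ _) ?_)
    have := card_union_le T1 T2
    omega
  -- now real arithmetic
  rcases Nat.eq_zero_or_pos n with hn0 | hn
  · subst hn0
    have : schurCount 0 (fun i => (⟨g i, hlt i⟩ : Fin (s + 2))) = 0 := by
      simp [schurCount]
    rw [this]
    norm_num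
  set k1 := T1.card
  set k2 := T2.card
  set k3 := T3.card
  have hKle : (schurCount n (fun i => (⟨g i, hlt i⟩ : Fin (s + 2))) : ℝ) ≤
      (k1 : ℝ) + k2 + k3 := by exact_mod_cast Nat.cast_le.mpr hcount
  refine le_trans hKle ?_
  have h2pow : (1:ℝ) ≤ 2 ^ s := one_le_pow₀ (by norm_num)
  have hdval : (D:ℝ) = 11 * 2 ^ s := by rw [hD]; push_cast; ring
  have hd1 : (1:ℝ) ≤ (D:ℝ) := by rw [hdval]; nlinarith
  have hd0 : (0:ℝ) < (D:ℝ) := by linarith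
  have hx1 : (1:ℝ) ≤ (n:ℝ) := by exact_mod_cast hn
  have hA4 : (D:ℝ) * a ≤ 4 * n := by exact_mod_cast hadm.2
  have hA4' : 4 * (n:ℝ) < (D:ℝ) * a + D := by exact_mod_cast hadm.1
  have hB10 : (D:ℝ) * b ≤ 10 * n := by exact_mod_cast hbdm.2
  have hB10' : 10 * (n:ℝ) < (D:ℝ) * b + D := by exact_mod_cast hbdm.1
  have hM11 : (D:ℝ) * M ≤ 11 * n := by exact_mod_cast hMdm
  have hba : ((b - 2*a : ℕ) : ℝ) = (b:ℝ) - 2*a := by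
    rw [Nat.cast_sub hab2]; push_cast; ring
  have hMb : ((M - b : ℕ) : ℝ) = (M:ℝ) - b := by rw [Nat.cast_sub hbM]
  have hab2' : 2*(a:ℝ) ≤ b := by exact_mod_cast hab2
  have hbM' : (b:ℝ) ≤ M := by exact_mod_cast hbM
  have g1 : 4 * (k1:ℝ) ≤ (a:ℝ) * a := by exact_mod_cast hk1
  have g2 : 4 * (k2:ℝ) ≤ ((b:ℝ) - 2*a) * ((b:ℝ) - 2*a) := by
    have h := (by exact_mod_cast hk2 : 4 * (k2:ℝ) ≤ ((b - 2*a : ℕ):ℝ) * ((b - 2*a : ℕ):ℝ))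
    rwa [hba] at h
  have g3 : 2 * (k3:ℝ) ≤ ((M:ℝ) - b) * ((M:ℝ) - b) := by
    have h := (by exact_mod_cast hk3 : 2 * (k3:ℝ) ≤ ((M - b : ℕ):ℝ) * ((M - b : ℕ):ℝ))
    rwa [hMb] at h
  have ha0 : (0:ℝ) ≤ a := Nat.cast_nonneg a
  have e1 : 2 * (D:ℝ)^2 * k1 ≤ 8 * (n:ℝ)^2 := by
    have hh1 := mul_le_mul_of_nonneg_left g1 (sq_nonneg (D:ℝ))
    have hh2 := mul_self_le_mul_self (mul_nonneg (le_of_lt hd0) ha0) hA4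
    linarith [hh1, hh2]
  have e2 : 2 * (D:ℝ)^2 * k2 ≤ 2 * (n:ℝ)^2 + 4 * n * D + 2 * (D:ℝ)^2 := by
    have hh1 := mul_le_mul_of_nonneg_left g2 (sq_nonneg (D:ℝ))
    have hnn : (0:ℝ) ≤ (D:ℝ) * ((b:ℝ) - 2*a) := mul_nonneg (le_of_lt hd0) (by linarith)
    have hub : (D:ℝ) * ((b:ℝ) - 2*a) ≤ 2 * n + 2 * D := by
      have : (D:ℝ) * ((b:ℝ) - 2*a) = (D:ℝ) * b - 2 * ((D:ℝ) * a) := by ring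
      linarith
    have hh2 := mul_self_le_mul_self hnn hub
    linarith [hh1, hh2]
  have e3 : 2 * (D:ℝ)^2 * k3 ≤ (n:ℝ)^2 + 2 * n * D + (D:ℝ)^2 := by
    have hh1 := mul_le_mul_of_nonneg_left g3 (sq_nonneg (D:ℝ))
    have hnn : (0:ℝ) ≤ (D:ℝ) * ((M:ℝ) - b) := mul_nonneg (le_of_lt hd0) (by linarith)
    have hub : (D:ℝ) * ((M:ℝ) - b) ≤ (n:ℝ) + D := by
      have : (D:ℝ) * ((M:ℝ) - b) = (D:ℝ) * M - (D:ℝ) * b := by ring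
      linarith
    have hh2 := mul_self_le_mul_self hnn hub
    linarith [hh1, hh2]
  have efin : 2 * (D:ℝ)^2 * (k1 + k2 + k3) ≤ 11 * (n:ℝ)^2 + 10 * n * (D:ℝ)^2 := by
    have hq1 : 6 * (n:ℝ) * D ≤ 6 * n * (D:ℝ)^2 := by
      have h := mul_nonneg (mul_nonneg (by linarith : (0:ℝ) ≤ 6 * n) (le_of_lt hd0))
        (by linarith : (0:ℝ) ≤ (D:ℝ) - 1)
      nlinarith [h]
    have hq2 : 3 * (D:ℝ)^2 ≤ 3 * (n:ℝ) * (D:ℝ)^2 := by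
      have h := mul_nonneg (mul_nonneg (by norm_num : (0:ℝ) ≤ 3) (sq_nonneg (D:ℝ)))
        (by linarith : (0:ℝ) ≤ (n:ℝ) - 1)
      nlinarith [h]
    have hnd2 : (0:ℝ) ≤ (n:ℝ) * (D:ℝ)^2 := by positivity
    linarith [e1, e2, e3, hq1, hq2, hnd2]
  rw [show 2 * (s + 2) - 3 = 2*s + 1 from by omega]
  have hpow2 : (2:ℝ) ^ (2*s+1) * 11 = 2 * (D:ℝ)^2 / 11 := by
    rw [pow_succ, two_mul, pow_add, hdval]; ring
  rw [hpow2, div_div_eq_mul_div]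
  have hfin : ((k1:ℝ) + k2 + k3 - 5*n) * (2 * (D:ℝ)^2) ≤ (n:ℝ)^2 * 11 := by linarith [efin]
  have := (le_div_iff₀ (by positivity : (0:ℝ) < 2 * (D:ℝ)^2)).mpr hfin
  linarith
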